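/- arXiv:2301.10534 — 3 statements merged into one kernel-verified Lean document; each statement's English description precedes it below -/
import Mathlib

section
/- Let G be a nilpotent group of class at most 3. Then for all x, y in G and every natural number n, [x^n, y] = [x,y]^n * [[x,y],x]^(n choose 2) * [[[x,y],x],x]^(n choose 3). -/
/-- The commutator `[a,b] = a⁻¹ * b⁻¹ * a * b`. -/
def cmtr {G : Type*} [Group G] (a b : G) : G := a⁻¹ * b⁻¹ * a * b

lemma cmtr_eq_one_iff {G : Type*} [Group G] (a b : G) :
    cmtr a b = 1 ↔ a * b = b * a := by
  unfold cmtr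
  constructor
  · intro h
    have := congrArg (fun w => b * a * w) h
    simpa [mul_assoc] using this
  · intro h
    simp [mul_assoc, h]

lemma conj_cmtr {G : Type*} [Group G] (a b : G) :
    b⁻¹ * a * b = a * cmtr a b := by
  unfold cmtr; group

lemma cmtr_mul_left {G : Type*} [Group G] (a b y : G) :
    cmtr (a * b) y = b⁻¹ * cmtr a y * b * cmtr b y := by
  unfold cmtr; group

/-- In a nilpotent group of class at most 3 (all 4-fold iterated commutators
trivial), for all `x, y` and every natural number `n`,
`[x^n, y] = [x,y]^n * [[x,y],x]^(n choose 2) * [[[x,y],x],x]^(n choose 3)`. -/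
theorem pow_commutator_class_le_three {G : Type*} [Group G]
    (hG : ∀ a b c d : G, cmtr (cmtr (cmtr a b) c) d = 1)
    (x y : G) (n : ℕ) :
    cmtr (x ^ n) y =
      (cmtr x y) ^ n * (cmtr (cmtr x y) x) ^ n.choose 2 *
        (cmtr (cmtr (cmtr x y) x) x) ^ n.choose 3 := by
  have he : cmtr (cmtr (cmtr x y) x) x = 1 := hG x y x x
  have hcen : ∀ z : G, Commute (cmtr (cmtr x y) x) z := by
    intro z
    exact (cmtr_eq_one_iff _ _).1 (hG x y x z)
  -- conjugation of [x,y] by x^m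
  have hconj : ∀ m : ℕ, (x ^ m)⁻¹ * cmtr x y * x ^ m =
      cmtr x y * (cmtr (cmtr x y) x) ^ m := by
    intro m
    induction m with
    | zero => simp
    | succ m ih =>
      rw [pow_succ, mul_inv_rev]
      calc x⁻¹ * (x ^ m)⁻¹ * cmtr x y * (x ^ m * x)
          = x⁻¹ * ((x ^ m)⁻¹ * cmtr x y * x ^ m) * x := by group
        _ = x⁻¹ * (cmtr x y * (cmtr (cmtr x y) x) ^ m) * x := by rw [ih]
        _ = x⁻¹ * cmtr x y * ((cmtr (cmtr x y) x) ^ m * x) := by group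
        _ = x⁻¹ * cmtr x y * (x * (cmtr (cmtr x y) x) ^ m) := by
            rw [((hcen x).pow_left m).eq]
        _ = (x⁻¹ * cmtr x y * x) * (cmtr (cmtr x y) x) ^ m := by group
        _ = cmtr x y * (cmtr (cmtr x y) x) ^ (m + 1) := by
            rw [conj_cmtr, pow_succ', mul_assoc]
  induction n with
  | zero => simp [cmtr]
  | succ n ih =>
    rw [pow_succ', cmtr_mul_left, ih]
    simp only [he, one_pow, mul_one]
    have hch : (n + 1).choose 2 = n + n.choose 2 := by
      rw [Nat.choose_succ_succ n 1, Nat.choose_one_right]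
    rw [hconj, hch]
    calc cmtr x y * (cmtr (cmtr x y) x) ^ n *
          ((cmtr x y) ^ n * (cmtr (cmtr x y) x) ^ n.choose 2)
        = cmtr x y * ((cmtr (cmtr x y) x) ^ n * (cmtr x y) ^ n) *
            (cmtr (cmtr x y) x) ^ n.choose 2 := by group
      _ = cmtr x y * ((cmtr x y) ^ n * (cmtr (cmtr x y) x) ^ n) *
            (cmtr (cmtr x y) x) ^ n.choose 2 := by
          rw [((hcen (cmtr x y)).pow_pow n n).eq]
      _ = (cmtr x y) ^ (n + 1) * (cmtr (cmtr x y) x) ^ (n + n.choose 2) := by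
          rw [pow_add]; group
end

section
/- Let G be a group and x, y elements of G that commute, with x of finite order m and y of finite order n. Then in any group L, for any exterior pairing Φ : G × G → L (i.e. Φ(ab,c) = Φ(aᵇ,cᵇ)Φ(b,c), Φ(a,bc) = Φ(a,c)Φ(aᶜ,bᶜ), and Φ(a,a) = 1 for all a,b,c in G), the order of Φ(x,y) divides gcd(m,n). -/
/-- If `x` and `y` are commuting elements of a group `G` of finite orders `m`
and `n` respectively, then for any exterior pairing `Φ : G × G → L`, the order
of `Φ(x,y)` divides `gcd(m,n)`. -/
theorem orderOf_exterior_pairing_dvd_gcd {G L : Type*} [Group G] [Group L]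
    (Φ : G → G → L)
    (h1 : ∀ a b c : G, Φ (a * b) c = Φ (b⁻¹ * a * b) (b⁻¹ * c * b) * Φ b c)
    (h2 : ∀ a b c : G, Φ a (b * c) = Φ a c * Φ (c⁻¹ * a * c) (c⁻¹ * b * c))
    (h3 : ∀ a : G, Φ a a = 1)
    (x y : G) (hxy : x * y = y * x) (m n : ℕ) (hm : 0 < m) (hn : 0 < n)
    (hx : orderOf x = m) (hy : orderOf y = n) :
    orderOf (Φ x y) ∣ Nat.gcd m n := by
  have hone : ∀ c : G, Φ 1 c = 1 := by
    intro c
    have := h1 1 1 c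
    simp at this
    exact this
  have hcomm : Commute x y := hxy
  have hconjx : ∀ k : ℕ, (x ^ k)⁻¹ * x * x ^ k = x := by
    intro k
    have : x * x ^ k = x ^ k * x := (Commute.refl x).pow_right k
    rw [mul_assoc, this, ← mul_assoc, inv_mul_cancel, one_mul]
  have hconjy : ∀ k : ℕ, (x ^ k)⁻¹ * y * x ^ k = y := by
    intro k
    have : y * x ^ k = x ^ k * y := ((hcomm.pow_left k).symm).eq
    rw [mul_assoc, this, ← mul_assoc, inv_mul_cancel, one_mul]
  have hconjx' : ∀ k : ℕ, (y ^ k)⁻¹ * x * y ^ k = x := by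
    intro k
    have : x * y ^ k = y ^ k * x := hcomm.pow_right k
    rw [mul_assoc, this, ← mul_assoc, inv_mul_cancel, one_mul]
  have hconjy' : ∀ k : ℕ, (y ^ k)⁻¹ * y * y ^ k = y := by
    intro k
    have : y * y ^ k = y ^ k * y := (Commute.refl y).pow_right k
    rw [mul_assoc, this, ← mul_assoc, inv_mul_cancel, one_mul]
  have hpowl : ∀ k : ℕ, Φ (x ^ k) y = (Φ x y) ^ k := by
    intro k
    induction k with
    | zero => simpa using hone y
    | succ k ih =>
      have : Φ (x * x ^ k) y = Φ ((x ^ k)⁻¹ * x * x ^ k) ((x ^ k)⁻¹ * y * x ^ k)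
          * Φ (x ^ k) y := h1 x (x ^ k) y
      rw [hconjx, hconjy, ih] at this
      rw [pow_succ', pow_succ']
      exact this
  have hpowr : ∀ k : ℕ, Φ x (y ^ k) = (Φ x y) ^ k := by
    intro k
    induction k with
    | zero =>
      simp only [pow_zero]
      have := h2 x 1 1
      simp at this
      exact this
    | succ k ih =>
      have : Φ x (y * y ^ k) = Φ x (y ^ k) * Φ ((y ^ k)⁻¹ * x * y ^ k) ((y ^ k)⁻¹ * y * y ^ k) :=
        h2 x y (y ^ k)
      rw [hconjx', hconjy', ih] at this
      rw [pow_succ', pow_succ]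
      exact this
  have hdm : orderOf (Φ x y) ∣ m := by
    rw [orderOf_dvd_iff_pow_eq_one, ← hpowl m, ← hx, pow_orderOf_eq_one]
    exact hone y
  have hdn : orderOf (Φ x y) ∣ n := by
    rw [orderOf_dvd_iff_pow_eq_one, ← hpowr n, ← hy, pow_orderOf_eq_one]
    have := h2 x 1 1
    simp at this
    exact this
  exact Nat.dvd_gcd hdm hdn
end

section
/- Let G be a nilpotent group of class at most 6. Then for all x, y in G and every positive integer n, [xⁿ,y] = [x,y]ⁿ · [x,y,x]^C(n,2) · [x,y,x,x]^C(n,3) · [x,y,x,x,x]^C(n,4) · [x,y,x,[x,y]]^a(n) · [x,y,x,x,x,x]^C(n,5) · [x,y,x,[x,y],x]^(C(n,3)+2·C(n,4)) · [x,y,x,x,[x,y]]^(C(n,3)+C(n,4)), where a(n) = n(n−1)(2n−1)/6, left-normed commutator notation [u,v,w] = [[u,v],w] is used, and C(n,k) denotes the binomial coefficient. -/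
namespace CmtrAux
variable {G : Type*} [Group G]

theorem cmtr_one (b : G) : cmtr 1 b = 1 := by simp [cmtr]

theorem foldl_one (bs : List G) : bs.foldl cmtr 1 = 1 := by
  induction bs with
  | nil => rfl
  | cons b bs ih => simpa [List.foldl, cmtr_one] using ih

/-- `g` vanishes under every chain of commutators of length at least `m`. -/
def cen (m : ℕ) (g : G) : Prop := ∀ bs : List G, m ≤ bs.length → bs.foldl cmtr g = 1

theorem cen_zero {g : G} (h : cen 0 g) : g = 1 := h [] (by simp)

theorem cen_of_eq_one {g : G} (h : g = 1) (m : ℕ) : cen m g := by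
  intro bs _; rw [h]; exact foldl_one bs

theorem cen_mono {m m' : ℕ} (hm : m ≤ m') {g : G} (h : cen m g) : cen m' g :=
  fun bs hl => h bs (le_trans hm hl)

theorem cen_succ {m : ℕ} {g : G} (h : ∀ b : G, cen m (cmtr g b)) : cen (m + 1) g := by
  intro bs hl
  match bs with
  | b :: bs' => exact h b bs' (by simpa using hl)

theorem cen_cmtr {m : ℕ} {g : G} (h : cen (m + 1) g) (b : G) : cen m (cmtr g b) := by
  intro bs hl
  exact h (b :: bs) (by simpa using Nat.succ_le_succ hl)

theorem cen_conj {m : ℕ} {g : G} (h : cen m g) (u : G) : cen m (u * g * u⁻¹) := by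
  induction m generalizing g u with
  | zero => exact cen_of_eq_one (by rw [cen_zero h]; group) 0
  | succ m ih =>
    refine cen_succ (fun b => ?_)
    have key : cmtr (u * g * u⁻¹) b = u * cmtr g (u⁻¹ * b * u) * u⁻¹ := by
      simp only [cmtr]; group
    rw [key]
    exact ih (cen_cmtr h _) u

theorem cen_inv {m : ℕ} {g : G} (h : cen m g) : cen m g⁻¹ := by
  induction m generalizing g with
  | zero => exact cen_of_eq_one (by rw [cen_zero h]; group) 0
  | succ m ih =>
    refine cen_succ (fun b => ?_)
    have key : cmtr g⁻¹ b = g * (cmtr g b)⁻¹ * g⁻¹ := by simp only [cmtr]; group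
    rw [key]
    exact cen_conj (ih (cen_cmtr h b)) g

theorem cen_mul {m : ℕ} {g h : G} (hg : cen m g) (hh : cen m h) : cen m (g * h) := by
  induction m generalizing g h with
  | zero => exact cen_of_eq_one (by rw [cen_zero hg, cen_zero hh, one_mul]) 0
  | succ m ih =>
    refine cen_succ (fun b => ?_)
    have key : cmtr (g * h) b = (h⁻¹ * cmtr g b * h⁻¹⁻¹) * cmtr h b := by
      simp only [cmtr]; group
    rw [key]
    exact ih (cen_conj (cen_cmtr hg b) h⁻¹) (cen_cmtr hh b)

theorem cen_pow {m : ℕ} {g : G} (h : cen m g) (k : ℕ) : cen m (g ^ k) := by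
  induction k with
  | zero => exact cen_of_eq_one (pow_zero g) m
  | succ k ih => rw [pow_succ]; exact cen_mul ih h

/-- commutation with `h` costs `k` levels of centrality. -/
def costs (k : ℕ) (h : G) : Prop := ∀ (m : ℕ) (g : G), cen (m + k) g → cen m (cmtr g h)

theorem costs_one (h : G) : costs 1 h := fun m g hg => cen_cmtr hg h

theorem costs_le {k k' : ℕ} (hk : k' ≤ k) {h : G} (hc : costs k h) : costs k' h :=
  fun m g hg => hc m g (cen_mono (by omega) hg)

theorem costs_inv {k : ℕ} {h : G} (hc : costs k h) : costs k h⁻¹ := by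
  intro m g hg
  have key : cmtr g h⁻¹ = h * (cmtr g h)⁻¹ * h⁻¹ := by simp only [cmtr]; group
  rw [key]
  exact cen_conj (cen_inv (hc m g hg)) h

theorem cmtr_rev (a b : G) : cmtr a b = (cmtr b a)⁻¹ := by simp only [cmtr]; group

theorem costs_cmtr {j k : ℕ} {a b : G} (ha : costs j a) (hb : costs k b) :
    costs (j + k) (cmtr a b) := by
  intro m g hg
  -- Hall–Witt with (p,q,r) = (g,a,b⁻¹)
  have hw : (a⁻¹ * cmtr (cmtr g a⁻¹) b⁻¹ * a) * (b⁻¹⁻¹ * cmtr (cmtr a b⁻¹⁻¹) g * b⁻¹) *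
      (g⁻¹ * cmtr (cmtr b⁻¹ g⁻¹) a * g) = 1 := by
    simp only [cmtr]; group
  have t1 : cen m (a⁻¹ * cmtr (cmtr g a⁻¹) b⁻¹ * a) := by
    have h1 : cen (m + k) (cmtr g a⁻¹) := costs_inv ha (m + k) g (cen_mono (by omega) hg)
    have h2 : cen m (cmtr (cmtr g a⁻¹) b⁻¹) := costs_inv hb m _ h1
    simpa using cen_conj h2 a⁻¹
  have t3 : cen m (g⁻¹ * cmtr (cmtr b⁻¹ g⁻¹) a * g) := by
    have h1 : cen (m + j) (cmtr g⁻¹ b⁻¹) :=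
      costs_inv hb (m + j) g⁻¹ (cen_inv (cen_mono (by omega) hg))
    have h2 : cen (m + j) (cmtr b⁻¹ g⁻¹) := by rw [cmtr_rev]; exact cen_inv h1
    have h3 : cen m (cmtr (cmtr b⁻¹ g⁻¹) a) := ha m _ h2
    simpa using cen_conj h3 g⁻¹
  have t2 : cen m (b⁻¹⁻¹ * cmtr (cmtr a b⁻¹⁻¹) g * b⁻¹) := by
    have solve : ∀ P T R : G, P * T * R = 1 → T = P⁻¹ * R⁻¹ := by
      intro P T R h
      have h2 : T = P⁻¹ * (P * T * R) * R⁻¹ := by group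
      rw [h2, h]; group
    rw [solve _ _ _ hw]
    exact cen_mul (cen_inv t1) (cen_inv t3)
  have h4 : cen m (cmtr (cmtr a b) g) := by
    have : cmtr (cmtr a b) g = b⁻¹ * (b⁻¹⁻¹ * cmtr (cmtr a b⁻¹⁻¹) g * b⁻¹) * b⁻¹⁻¹ := by
      simp only [inv_inv]; group
    rw [this]
    exact cen_conj t2 b⁻¹
  rw [cmtr_rev]
  exact cen_inv h4

theorem vanish {p : ℕ} {g h : G} (hg : cen p g) (hh : costs p h) : cmtr g h = 1 :=
  cen_zero (hh 0 g (cen_mono (by omega) hg))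

end CmtrAux

section NatArith

theorem choose2_succ (n : ℕ) : (n+1).choose 2 = n.choose 2 + n := by
  rw [Nat.choose_succ_succ', Nat.choose_one_right]; norm_num; omega

theorem choose3_succ (n : ℕ) : (n+1).choose 3 = n.choose 3 + n.choose 2 := by
  rw [Nat.choose_succ_succ']; norm_num; omega

theorem choose4_succ (n : ℕ) : (n+1).choose 4 = n.choose 4 + n.choose 3 := by
  rw [Nat.choose_succ_succ']; norm_num; omega

theorem choose5_succ (n : ℕ) : (n+1).choose 5 = n.choose 5 + n.choose 4 := by
  rw [Nat.choose_succ_succ']; norm_num; omega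

theorem a_succ (n : ℕ) : (n+1)*((n+1)-1)*(2*(n+1)-1)/6 = n*(n-1)*(2*n-1)/6 + n*n := by
  have h : (n+1)*((n+1)-1)*(2*(n+1)-1) = n*(n-1)*(2*n-1) + 6*(n*n) := by
    cases n with
    | zero => rfl
    | succ m =>
      have h1 : (m+1+1) - 1 = m+1 := by omega
      have h2 : 2*(m+1+1) - 1 = 2*m+3 := by omega
      have h3 : (m+1) - 1 = m := by omega
      have h4 : 2*(m+1) - 1 = 2*m+1 := by omega
      rw [h1, h2, h3, h4]; ring
  rw [h, Nat.mul_comm 6 (n*n), Nat.add_mul_div_right _ _ (by norm_num : (0:ℕ) < 6)]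

theorem two_choose2 (n : ℕ) : 2 * n.choose 2 + n = n * n := by
  induction n with
  | zero => rfl
  | succ m ih =>
    have h : (m+1)*(m+1) = m*m + 2*m + 1 := by ring
    rw [choose2_succ]
    omega

theorem a_eq_choose (n : ℕ) : n*(n-1)*(2*n-1)/6 = n.choose 2 + 2 * n.choose 3 := by
  induction n with
  | zero => rfl
  | succ m ih =>
    have h1 := a_succ m
    have h2 := two_choose2 m
    rw [choose2_succ, choose3_succ]
    omega

end NatArith


theorem collect_aux {G : Type*} [Group G] (x c1 c2 c3 c4 c5 d e f : G)
    (r21 : c2 * c1 = c1 * c2 * d) (r31 : c3 * c1 = c1 * c3 * f)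
    (x1 : x⁻¹ * c1 * x = c1 * c2) (x2 : x⁻¹ * c2 * x = c2 * c3)
    (x3 : x⁻¹ * c3 * x = c3 * c4) (x4 : x⁻¹ * c4 * x = c4 * c5)
    (x5 : x⁻¹ * c5 * x = c5) (xd : x⁻¹ * d * x = d * e)
    (xe : x⁻¹ * e * x = e) (xf : x⁻¹ * f * x = f)
    (H14 : Commute c1 c4) (H15 : Commute c1 c5) (H1d : Commute c1 d)
    (H1e : Commute c1 e) (H1f : Commute c1 f)
    (H23 : Commute c2 c3) (H2d : Commute c2 d)
    (H34 : Commute c3 c4) (H3d : Commute c3 d) (H3f : Commute c3 f)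
    (H45 : Commute c4 c5) (H4d : Commute c4 d) (H4f : Commute c4 f)
    (H5d : Commute c5 d) (H5e : Commute c5 e) (H5f : Commute c5 f)
    (Hde : Commute d e) (Hdf : Commute d f) (Hef : Commute e f)
    (n A B C D E F H : ℕ) :
    x⁻¹ * (c1 ^ n * c2 ^ A * c3 ^ B * c4 ^ C * d ^ D * c5 ^ E * e ^ F * f ^ H) * x * c1
      = c1 ^ (n+1) * (c2 ^ (n+A) * (c3 ^ (A+B) * (c4 ^ (B+C) *
        (d ^ (n + n.choose 2 + A + D) * (c5 ^ (C+E) * (e ^ (D+F) * f ^ (A+B+H))))))) := by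
  have swp : ∀ {a b : G}, Commute a b → ∀ (i j : ℕ) (t : G),
      a ^ i * (b ^ j * t) = b ^ j * (a ^ i * t) := by
    intro a b h i j t
    rw [← mul_assoc, (h.pow_pow i j).eq, mul_assoc]
  have swe : ∀ {a b : G}, Commute a b → ∀ (i : ℕ) (t : G),
      a ^ i * (b * t) = b * (a ^ i * t) := by
    intro a b h i t
    rw [← mul_assoc, (h.pow_left i).eq, mul_assoc]
  have mg : ∀ (a : G) (i j : ℕ) (t : G), a ^ i * (a ^ j * t) = a ^ (i + j) * t := by
    intro a i j t; rw [← mul_assoc, ← pow_add]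
  have mg1 : ∀ (a : G) (i : ℕ) (t : G), a ^ i * (a * t) = a ^ (i + 1) * t := by
    intro a i t; rw [← mul_assoc, ← pow_succ]
  have mgE : ∀ (a : G) (i j : ℕ), a ^ i * a ^ j = a ^ (i + j) := fun a i j => (pow_add a i j).symm
  have cm : ∀ a b : G, x⁻¹ * (a * b) * x = (x⁻¹ * a * x) * (x⁻¹ * b * x) := by
    intro a b; group
  have cp : ∀ (a : G) (k : ℕ), x⁻¹ * a ^ k * x = (x⁻¹ * a * x) ^ k := by
    intro a k
    induction k with
    | zero => group
    | succ k ih => rw [pow_succ, pow_succ, ← ih]; group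
  have S1 : ∀ (k : ℕ) (t : G), c2 ^ k * (c1 * t) = c1 * (c2 ^ k * (d ^ k * t)) := by
    intro k
    induction k with
    | zero => intro t; simp
    | succ k ih =>
      intro t
      calc c2 ^ (k+1) * (c1 * t) = c2 ^ k * (c2 * (c1 * t)) := by
            rw [pow_succ, mul_assoc]
        _ = c2 ^ k * (c1 * (c2 * (d * t))) := by
            rw [← mul_assoc c2 c1 t, r21]; group
        _ = c1 * (c2 ^ k * (d ^ k * (c2 * (d * t)))) := ih _
        _ = c1 * (c2 ^ k * (c2 * (d ^ k * (d * t)))) := by rw [swe H2d.symm k]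
        _ = c1 * (c2 ^ (k+1) * (d ^ (k+1) * t)) := by rw [mg1 d k, mg1 c2 k]
  have S2 : ∀ (k : ℕ) (t : G), c3 ^ k * (c1 * t) = c1 * (c3 ^ k * (f ^ k * t)) := by
    intro k
    induction k with
    | zero => intro t; simp
    | succ k ih =>
      intro t
      calc c3 ^ (k+1) * (c1 * t) = c3 ^ k * (c3 * (c1 * t)) := by
            rw [pow_succ, mul_assoc]
        _ = c3 ^ k * (c1 * (c3 * (f * t))) := by
            rw [← mul_assoc c3 c1 t, r31]; group
        _ = c1 * (c3 ^ k * (f ^ k * (c3 * (f * t)))) := ih _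
        _ = c1 * (c3 ^ k * (c3 * (f ^ k * (f * t)))) := by rw [swe H3f.symm k]
        _ = c1 * (c3 ^ (k+1) * (f ^ (k+1) * t)) := by rw [mg1 f k, mg1 c3 k]
  have S3 : ∀ k : ℕ, (c1 * c2) ^ k = c1 ^ k * (c2 ^ k * d ^ (k.choose 2)) := by
    intro k
    induction k with
    | zero => simp
    | succ k ih =>
      have hch : (k+1).choose 2 = k + k.choose 2 := by
        rw [Nat.choose_succ_succ', Nat.choose_one_right]
      calc (c1 * c2) ^ (k+1) = (c1 * c2) ^ k * (c1 * c2) := by rw [pow_succ]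
        _ = c1 ^ k * (c2 ^ k * (d ^ (k.choose 2) * (c1 * c2))) := by
            rw [ih]; simp only [mul_assoc]
        _ = c1 ^ k * (c2 ^ k * (c1 * (d ^ (k.choose 2) * c2))) := by
            rw [← mul_assoc (d ^ (k.choose 2)) c1 c2, (H1d.symm.pow_left _).eq, mul_assoc]
        _ = c1 ^ k * (c2 ^ k * (c1 * (c2 * d ^ (k.choose 2)))) := by
            rw [((H2d.pow_right _).symm).eq]
        _ = c1 ^ k * (c1 * (c2 ^ k * (d ^ k * (c2 * d ^ (k.choose 2))))) := by rw [S1 k]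
        _ = c1 ^ k * (c1 * (c2 ^ k * (c2 * (d ^ k * d ^ (k.choose 2))))) := by
            rw [swe H2d.symm k]
        _ = c1 ^ (k+1) * (c2 ^ (k+1) * d ^ ((k+1).choose 2)) := by
            rw [mgE d k, mg1 c2 k, mg1 c1 k, hch]
  simp only [cm, cp, x1, x2, x3, x4, x5, xd, xe, xf]
  rw [S3 n, H23.mul_pow, H34.mul_pow, H45.mul_pow, Hde.mul_pow]
  simp only [mul_assoc]
  rw [(Commute.pow_left H1f.symm H).eq]
  rw [swe H1e.symm F, swe H15.symm E, swe H1e.symm D, swe H1d.symm D,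
      swe H15.symm C, swe H14.symm C, swe H14.symm B]
  rw [S2 B, S2 A, S1 A, swe H1d.symm (n.choose 2), S1 n, mg1 c1 n]
  rw [mg d n (n.choose 2)]
  rw [swp H2d.symm (n + n.choose 2) A, mg c2 n A, mg d (n + n.choose 2) A]
  rw [swp H3f.symm A B, mg c3 A B, mg f A B]
  rw [swp H3d.symm (n + n.choose 2 + A) (A+B)]
  rw [swp H4f.symm (A+B) B, swp H4f.symm (A+B) C, mg c4 B C]
  rw [swp H5f.symm (A+B) C, swp Hdf.symm (A+B) D, swp Hef.symm (A+B) D,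
      swp H5f.symm (A+B) E, swp Hef.symm (A+B) F, mgE f (A+B) H]
  rw [swp H4d.symm (n + n.choose 2 + A) (B+C), swp H5d C D,
      mg d (n + n.choose 2 + A) D]
  rw [swp H5e.symm D E, mg c5 C E, mg e D F]

open CmtrAux in
/-- Let `G` be nilpotent of class at most 6 (all 7-fold iterated commutators
trivial).  Then for all `x, y ∈ G` and every positive integer `n`,
`[xⁿ,y] = [x,y]ⁿ · [x,y,x]^C(n,2) · [x,y,x,x]^C(n,3) · [x,y,x,x,x]^C(n,4) ·
[x,y,x,[x,y]]^a(n) · [x,y,x,x,x,x]^C(n,5) · [x,y,x,[x,y],x]^(C(n,3)+2C(n,4)) ·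
[x,y,x,x,[x,y]]^(C(n,3)+C(n,4))`, where `a(n) = n(n−1)(2n−1)/6` and
commutators are left-normed. -/
theorem pow_commutator_class_le_six {G : Type*} [Group G]
    (hG : ∀ a₁ a₂ a₃ a₄ a₅ a₆ a₇ : G,
      cmtr (cmtr (cmtr (cmtr (cmtr (cmtr a₁ a₂) a₃) a₄) a₅) a₆) a₇ = 1)
    (x y : G) (n : ℕ) (hn : 0 < n) :
    cmtr (x ^ n) y =
      (cmtr x y) ^ n *
      (cmtr (cmtr x y) x) ^ n.choose 2 *
      (cmtr (cmtr (cmtr x y) x) x) ^ n.choose 3 *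
      (cmtr (cmtr (cmtr (cmtr x y) x) x) x) ^ n.choose 4 *
      (cmtr (cmtr (cmtr x y) x) (cmtr x y)) ^ (n * (n - 1) * (2 * n - 1) / 6) *
      (cmtr (cmtr (cmtr (cmtr (cmtr x y) x) x) x) x) ^ n.choose 5 *
      (cmtr (cmtr (cmtr (cmtr x y) x) (cmtr x y)) x) ^ (n.choose 3 + 2 * n.choose 4) *
      (cmtr (cmtr (cmtr (cmtr x y) x) x) (cmtr x y)) ^ (n.choose 3 + n.choose 4) := by
  induction n, hn using Nat.le_induction with
  | base =>
    have h2 : Nat.choose 1 2 = 0 := rfl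
    have h3 : Nat.choose 1 3 = 0 := rfl
    have h4 : Nat.choose 1 4 = 0 := rfl
    have h5 : Nat.choose 1 5 = 0 := rfl
    have ha : 1 * (1 - 1) * (2 * 1 - 1) / 6 = 0 := rfl
    rw [h2, h3, h4, h5, ha]
    norm_num
  | succ n hn ih =>
    have key : cmtr (x ^ (n+1)) y = x⁻¹ * cmtr (x ^ n) y * x * cmtr x y := by
      simp only [cmtr, pow_succ]; group
    rw [key, ih]
    set c1 := cmtr x y with hc1
    set c2 := cmtr c1 x with hc2
    set c3 := cmtr c2 x with hc3
    set c4 := cmtr c3 x with hc4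
    set c5 := cmtr c4 x with hc5
    set d := cmtr c2 c1 with hd
    set e := cmtr d x with he
    set f := cmtr c3 c1 with hf
    -- centrality levels
    have cen6 : ∀ g : G, cen 6 g := fun g =>
      cen_succ (m := 5) fun b1 => cen_succ (m := 4) fun b2 => cen_succ (m := 3) fun b3 =>
      cen_succ (m := 2) fun b4 => cen_succ (m := 1) fun b5 => cen_succ (m := 0) fun b6 =>
      cen_of_eq_one (hG g b1 b2 b3 b4 b5 b6) 0
    have n5c1 : cen 5 c1 := cen_cmtr (m := 5) (cen6 x) y
    have n4c2 : cen 4 c2 := cen_cmtr (m := 4) n5c1 x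
    have n3c3 : cen 3 c3 := cen_cmtr (m := 3) n4c2 x
    have n2c4 : cen 2 c4 := cen_cmtr (m := 2) n3c3 x
    have n1c5 : cen 1 c5 := cen_cmtr (m := 1) n2c4 x
    -- costs
    have k2c1 : costs 2 c1 := costs_cmtr (costs_one x) (costs_one y)
    have k3c2 : costs 3 c2 := costs_cmtr k2c1 (costs_one x)
    have k4c3 : costs 4 c3 := costs_cmtr k3c2 (costs_one x)
    have k5c4 : costs 5 c4 := costs_cmtr k4c3 (costs_one x)
    have k6c5 : costs 6 c5 := costs_cmtr k5c4 (costs_one x)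
    have k5d : costs 5 d := costs_cmtr k3c2 k2c1
    have k6e : costs 6 e := costs_cmtr k5d (costs_one x)
    have k6f : costs 6 f := costs_cmtr k4c3 k2c1
    have n2d : cen 2 d := k2c1 2 c2 (cen_mono (by omega) n4c2)
    have n1e : cen 1 e := cen_cmtr (m := 1) n2d x
    have n1f : cen 1 f := k2c1 1 c3 (cen_mono (by omega) n3c3)
    -- commutation
    have cmm : ∀ a b : G, cmtr a b = 1 → Commute a b := by
      intro a b h
      have h2 : a * b = b * a * cmtr a b := by simp only [cmtr]; group
      rw [h, mul_one] at h2
      exact h2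
    have V : ∀ (p : ℕ) (g h : G), cen p g → costs p h → Commute g h :=
      fun _ g h hg hh => cmm g h (vanish hg hh)
    have H14 : Commute c1 c4 := V 5 c1 c4 n5c1 k5c4
    have H15 : Commute c1 c5 := V 5 c1 c5 n5c1 (costs_le (by omega) k6c5)
    have H1d : Commute c1 d := V 5 c1 d n5c1 k5d
    have H1e : Commute c1 e := V 5 c1 e n5c1 (costs_le (by omega) k6e)
    have H1f : Commute c1 f := V 5 c1 f n5c1 (costs_le (by omega) k6f)
    have H23 : Commute c2 c3 := V 4 c2 c3 n4c2 k4c3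
    have H2d : Commute c2 d := V 4 c2 d n4c2 (costs_le (by omega) k5d)
    have H34 : Commute c3 c4 := V 3 c3 c4 n3c3 (costs_le (by omega) k5c4)
    have H3d : Commute c3 d := V 3 c3 d n3c3 (costs_le (by omega) k5d)
    have H3f : Commute c3 f := V 3 c3 f n3c3 (costs_le (by omega) k6f)
    have H45 : Commute c4 c5 := V 2 c4 c5 n2c4 (costs_le (by omega) k6c5)
    have H4d : Commute c4 d := V 2 c4 d n2c4 (costs_le (by omega) k5d)
    have H4f : Commute c4 f := V 2 c4 f n2c4 (costs_le (by omega) k6f)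
    have H5d : Commute c5 d := V 1 c5 d n1c5 (costs_one d)
    have H5e : Commute c5 e := V 1 c5 e n1c5 (costs_one e)
    have H5f : Commute c5 f := V 1 c5 f n1c5 (costs_one f)
    have Hde : Commute d e := V 2 d e n2d (costs_le (by omega) k6e)
    have Hdf : Commute d f := V 2 d f n2d (costs_le (by omega) k6f)
    have Hef : Commute e f := V 1 e f n1e (costs_one f)
    -- relations
    have mulrel : ∀ a b : G, a * b = b * a * cmtr a b := by
      intro a b; simp only [cmtr]; group
    have r21 : c2 * c1 = c1 * c2 * d := by rw [mulrel c2 c1, ← hd]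
    have r31 : c3 * c1 = c1 * c3 * f := by rw [mulrel c3 c1, ← hf]
    have cj : ∀ g : G, x⁻¹ * g * x = g * cmtr g x := by
      intro g; simp only [cmtr]; group
    have x1 : x⁻¹ * c1 * x = c1 * c2 := by rw [cj c1, ← hc2]
    have x2 : x⁻¹ * c2 * x = c2 * c3 := by rw [cj c2, ← hc3]
    have x3 : x⁻¹ * c3 * x = c3 * c4 := by rw [cj c3, ← hc4]
    have x4 : x⁻¹ * c4 * x = c4 * c5 := by rw [cj c4, ← hc5]
    have x5 : x⁻¹ * c5 * x = c5 := by rw [cj c5, vanish n1c5 (costs_one x), mul_one]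
    have xd : x⁻¹ * d * x = d * e := by rw [cj d, ← he]
    have xe : x⁻¹ * e * x = e := by rw [cj e, vanish n1e (costs_one x), mul_one]
    have xf : x⁻¹ * f * x = f := by rw [cj f, vanish n1f (costs_one x), mul_one]
    rw [collect_aux x c1 c2 c3 c4 c5 d e f r21 r31 x1 x2 x3 x4 x5 xd xe xf
      H14 H15 H1d H1e H1f H23 H2d H34 H3d H3f H45 H4d H4f H5d H5e H5f Hde Hdf Hef
      n (n.choose 2) (n.choose 3) (n.choose 4) (n*(n-1)*(2*n-1)/6) (n.choose 5)
      (n.choose 3 + 2*n.choose 4) (n.choose 3 + n.choose 4)]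
    simp only [mul_assoc]
    -- exponent arithmetic
    have E2 := choose2_succ n
    have E3 := choose3_succ n
    have E4 := choose4_succ n
    have E5 := choose5_succ n
    have EA := a_succ n
    have ES := two_choose2 n
    have EQ := a_eq_choose n
    have M1 : n * ((n-1) * (2*n-1)) = n * (n-1) * (2*n-1) := by ring
    have M2 : (n+1) * ((n+1-1) * (2*(n+1)-1)) = (n+1) * (n+1-1) * (2*(n+1)-1) := by ring
    have pe : ∀ (a : G) (i j : ℕ), i = j → a ^ i = a ^ j := fun a i j h => by rw [h]
    have me : ∀ (p q r s : G), p = q → r = s → p * r = q * s :=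
      fun _ _ _ _ h1 h2 => by rw [h1, h2]
    exact me _ _ _ _ (pe c1 _ _ rfl)
      (me _ _ _ _ (pe c2 _ _ (by omega))
      (me _ _ _ _ (pe c3 _ _ (by omega))
      (me _ _ _ _ (pe c4 _ _ (by omega))
      (me _ _ _ _ (pe d _ _ (by omega))
      (me _ _ _ _ (pe c5 _ _ (by omega))
      (me _ _ _ _ (pe e _ _ (by omega))
      (pe f _ _ (by omega))))))))
end
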